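/- Let G be a Lie group with a left invariant Riemannian metric and Riemannian distance d. Then for all a, b, g in G, d(a,b) ≤ R(g^{-1}) · d(ag, bg), where R(h) = ‖(dR_h)_e‖. -/

import Mathlib

/- STATEMENT 3: Let `G` be a Lie group with a left invariant Riemannian metric (determined by an
inner product on the Lie algebra `E = T₁G`) and Riemannian distance `d` (the infimum of lengths
of smooth paths, lengths being measured with the left invariant metric).  Then for all
`a, b, g ∈ G`, `d(a,b) ≤ R(g⁻¹) · d(ag, bg)`, where `R(h) = ‖(dR_h)_1‖` is the metric operator
norm of the differential at the identity of right translation by `h`, i.e. the operator norm of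
`d(L_{h⁻¹})_h ∘ (dR_h)_1 : E → E`. -/

open scoped Manifold

/-- Length of a path in `G`, measured with the left invariant metric: the norm of the velocity
left-translated to the identity. -/
noncomputable def leftInvPathLength {E : Type*} [NormedAddCommGroup E] [InnerProductSpace ℝ E]
    {G : Type*} [TopologicalSpace G] [ChartedSpace E G] [Group G] [LieGroup 𝓘(ℝ, E) (⊤ : ℕ∞) G]
    (c : ℝ → G) : ℝ :=
  ∫ t in (0:ℝ)..1,
    ‖(show E from mfderiv 𝓘(ℝ, E) 𝓘(ℝ, E) (fun y => (c t)⁻¹ * y) (c t)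
        (mfderiv 𝓘(ℝ, ℝ) 𝓘(ℝ, E) c t (show TangentSpace 𝓘(ℝ, ℝ) t from (1 : ℝ))))‖

/-- The Riemannian distance of the left invariant metric: infimum of lengths of smooth paths. -/
noncomputable def leftInvDist {E : Type*} [NormedAddCommGroup E] [InnerProductSpace ℝ E]
    {G : Type*} [TopologicalSpace G] [ChartedSpace E G] [Group G] [LieGroup 𝓘(ℝ, E) (⊤ : ℕ∞) G]
    (a b : G) : ℝ :=
  sInf {L | ∃ c : ℝ → G, ContMDiff 𝓘(ℝ, ℝ) 𝓘(ℝ, E) 1 c ∧ c 0 = a ∧ c 1 = b ∧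
    L = leftInvPathLength (E := E) c}

/-- `R(g) = ‖(dR_g)_1‖`, the metric operator norm of the differential of right translation. -/
noncomputable def rightTransNorm {E : Type*} [NormedAddCommGroup E] [InnerProductSpace ℝ E]
    {G : Type*} [TopologicalSpace G] [ChartedSpace E G] [Group G] [LieGroup 𝓘(ℝ, E) (⊤ : ℕ∞) G]
    (g : G) : ℝ :=
  ‖(show E →L[ℝ] E from (mfderiv 𝓘(ℝ, E) 𝓘(ℝ, E) (fun y => g⁻¹ * y) g).comp
      (mfderiv 𝓘(ℝ, E) 𝓘(ℝ, E) (fun y => y * g) 1))‖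

section Aux
variable {E : Type*} [NormedAddCommGroup E] [InnerProductSpace ℝ E]
  {G : Type*} [TopologicalSpace G] [ChartedSpace E G] [Group G] [LieGroup 𝓘(ℝ, E) (⊤ : ℕ∞) G]

noncomputable def lvel (c : ℝ → G) (t : ℝ) : E :=
  mfderiv 𝓘(ℝ, E) 𝓘(ℝ, E) (fun y => (c t)⁻¹ * y) (c t)
    (mfderiv 𝓘(ℝ, ℝ) 𝓘(ℝ, E) c t (1 : ℝ))

lemma contMDiff_theta {c : ℝ → G} (hc : ContMDiff 𝓘(ℝ, ℝ) 𝓘(ℝ, E) 1 c) :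
    ContMDiff 𝓘(ℝ, ℝ × ℝ) 𝓘(ℝ, E) 1 (fun p : ℝ × ℝ => (c p.1)⁻¹ * c p.2) := by
  have h1 : ContMDiff 𝓘(ℝ, ℝ × ℝ) 𝓘(ℝ, E) 1 (fun p : ℝ × ℝ => c p.1) :=
    hc.comp (contDiff_fst.contMDiff)
  have h2 : ContMDiff 𝓘(ℝ, ℝ × ℝ) 𝓘(ℝ, E) 1 (fun p : ℝ × ℝ => c p.2) :=
    hc.comp (contDiff_snd.contMDiff)
  exact h1.inv.mul h2

lemma lvel_eq_fderiv {c : ℝ → G} (hc : ContMDiff 𝓘(ℝ, ℝ) 𝓘(ℝ, E) 1 c) (t : ℝ) :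
    lvel c t = fderiv ℝ
      (fun p : ℝ × ℝ => extChartAt 𝓘(ℝ, E) (1 : G) ((c p.1)⁻¹ * c p.2)) (t, t)
      ((0 : ℝ), (1 : ℝ)) := by
  have hΘ := contMDiff_theta hc
  have hΘt : MDifferentiableAt 𝓘(ℝ, ℝ × ℝ) 𝓘(ℝ, E)
      (fun p : ℝ × ℝ => (c p.1)⁻¹ * c p.2) (t, t) := (hΘ (t, t)).mdifferentiableAt one_ne_zero
  have hι : MDifferentiableAt 𝓘(ℝ, ℝ) 𝓘(ℝ, ℝ × ℝ) (Prod.mk t : ℝ → ℝ × ℝ) t :=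
    ((differentiableAt_const t).prodMk differentiableAt_id).mdifferentiableAt
  -- step a
  have hg : MDifferentiableAt 𝓘(ℝ, E) 𝓘(ℝ, E) (fun y => (c t)⁻¹ * y) (c t) :=
    mdifferentiableAt_mul_left
  have ha : mfderiv 𝓘(ℝ, ℝ) 𝓘(ℝ, E) ((fun y => (c t)⁻¹ * y) ∘ c) t =
      (mfderiv 𝓘(ℝ, E) 𝓘(ℝ, E) (fun y => (c t)⁻¹ * y) (c t)).comp
        (mfderiv 𝓘(ℝ, ℝ) 𝓘(ℝ, E) c t) :=
    mfderiv_comp t hg (hc.mdifferentiableAt one_ne_zero)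
  have ha' : lvel (E := E) c t = (mfderiv 𝓘(ℝ, ℝ) 𝓘(ℝ, E) ((fun y => (c t)⁻¹ * y) ∘ c) t : ℝ →L[ℝ] E) (1 : ℝ) := by
    rw [ha]; rfl
  have hb : ((fun y => (c t)⁻¹ * y) ∘ c) =
      ((fun p : ℝ × ℝ => (c p.1)⁻¹ * c p.2) ∘ (Prod.mk t : ℝ → ℝ × ℝ)) := rfl
  have hcmp : mfderiv 𝓘(ℝ, ℝ) 𝓘(ℝ, E)
      ((fun p : ℝ × ℝ => (c p.1)⁻¹ * c p.2) ∘ (Prod.mk t : ℝ → ℝ × ℝ)) t =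
      (mfderiv 𝓘(ℝ, ℝ × ℝ) 𝓘(ℝ, E) (fun p : ℝ × ℝ => (c p.1)⁻¹ * c p.2) (t, t)).comp
        (mfderiv 𝓘(ℝ, ℝ) 𝓘(ℝ, ℝ × ℝ) (Prod.mk t : ℝ → ℝ × ℝ) t) :=
    mfderiv_comp t hΘt hι
  have hι' : mfderiv 𝓘(ℝ, ℝ) 𝓘(ℝ, ℝ × ℝ) (Prod.mk t : ℝ → ℝ × ℝ) t (1 : ℝ)
      = ((0 : ℝ), (1 : ℝ)) := by
    have h : HasFDerivAt (Prod.mk t : ℝ → ℝ × ℝ)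
        ((0 : ℝ →L[ℝ] ℝ).prod (ContinuousLinearMap.id ℝ ℝ)) t :=
      (hasFDerivAt_const t t).prodMk (hasFDerivAt_id t)
    rw [mfderiv_eq_fderiv, h.fderiv]
    rfl
  have happ : lvel (E := E) c t = (mfderiv 𝓘(ℝ, ℝ × ℝ) 𝓘(ℝ, E) (fun p : ℝ × ℝ => (c p.1)⁻¹ * c p.2) (t, t) : ℝ × ℝ →L[ℝ] E)
      (mfderiv 𝓘(ℝ, ℝ) 𝓘(ℝ, ℝ × ℝ) (Prod.mk t : ℝ → ℝ × ℝ) t (1 : ℝ)) := by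
    rw [ha', hb, hcmp]; rfl
  have hmf := hΘt.mfderiv
  rw [happ, hι', hmf]
  simp only [writtenInExtChartAt, extChartAt_model_space_eq_id, PartialEquiv.refl_symm,
    PartialEquiv.refl_coe, Function.comp_id, CompTriple.comp_eq, fderivWithin_univ,
    inv_mul_cancel, modelWithCornersSelf_coe, Set.range_id, Function.comp_def, id_eq]
  rfl

lemma continuous_lvel {c : ℝ → G} (hc : ContMDiff 𝓘(ℝ, ℝ) 𝓘(ℝ, E) 1 c) :
    Continuous (fun t => lvel (E := E) c t) := by
  have hΘ := contMDiff_theta hc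
  have heq : (fun t => lvel (E := E) c t) = fun t =>
      fderiv ℝ (fun p : ℝ × ℝ => extChartAt 𝓘(ℝ, E) (1 : G) ((c p.1)⁻¹ * c p.2)) (t, t)
        ((0 : ℝ), (1 : ℝ)) := funext (lvel_eq_fderiv hc)
  rw [heq, continuous_iff_continuousAt]
  intro t₀
  have h1 : ContDiffAt ℝ 1
      (fun p : ℝ × ℝ => extChartAt 𝓘(ℝ, E) (1 : G) ((c p.1)⁻¹ * c p.2)) (t₀, t₀) := by
    have h := (hΘ (t₀, t₀))
    rw [contMDiffAt_iff] at h
    obtain ⟨-, h⟩ := h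
    simp only [extChartAt_model_space_eq_id, PartialEquiv.refl_symm, PartialEquiv.refl_coe,
      Function.comp_id, CompTriple.comp_eq, modelWithCornersSelf_coe, Set.range_id,
      contDiffWithinAt_univ, Function.comp_def, id_eq, inv_mul_cancel] at h
    exact h
  obtain ⟨u, hu, hcd⟩ := h1.contDiffOn le_rfl (by simp)
  have hop : interior u ∈ nhds (t₀, t₀) := by
    exact interior_mem_nhds.mpr hu
  have hco : ContinuousOn
      (fderiv ℝ (fun p : ℝ × ℝ => extChartAt 𝓘(ℝ, E) (1 : G) ((c p.1)⁻¹ * c p.2)))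
      (interior u) :=
    (hcd.mono interior_subset).continuousOn_fderiv_of_isOpen isOpen_interior le_rfl
  have hca : ContinuousAt
      (fun q : ℝ × ℝ => fderiv ℝ
        (fun p : ℝ × ℝ => extChartAt 𝓘(ℝ, E) (1 : G) ((c p.1)⁻¹ * c p.2)) q) (t₀, t₀) :=
    hco.continuousAt hop
  have hdiag : ContinuousAt (fun t : ℝ => ((t, t) : ℝ × ℝ)) t₀ :=
    (continuous_id.prodMk continuous_id).continuousAt
  have hmid : ContinuousAt (fun t : ℝ => fderiv ℝ
      (fun p : ℝ × ℝ => extChartAt 𝓘(ℝ, E) (1 : G) ((c p.1)⁻¹ * c p.2)) (t, t)) t₀ :=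
    hca.comp (f := fun t : ℝ => ((t, t) : ℝ × ℝ)) hdiag
  exact ((ContinuousLinearMap.apply ℝ E (((0 : ℝ), (1 : ℝ)))).continuous.continuousAt).comp hmid

lemma mfderiv_point_congr (f : G → G) {x y : G} (h : x = y) :
    (mfderiv 𝓘(ℝ, E) 𝓘(ℝ, E) f x : E →L[ℝ] E) = mfderiv 𝓘(ℝ, E) 𝓘(ℝ, E) f y := by
  subst h; rfl

lemma lvel_mul_right {c : ℝ → G} (hc : ContMDiff 𝓘(ℝ, ℝ) 𝓘(ℝ, E) 1 c) (g : G) (t : ℝ) :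
    lvel (E := E) (fun s => c s * g⁻¹) t =
      ((mfderiv 𝓘(ℝ, E) 𝓘(ℝ, E) (fun y => g⁻¹⁻¹ * y) g⁻¹).comp
        (mfderiv 𝓘(ℝ, E) 𝓘(ℝ, E) (fun y => y * g⁻¹) 1) : E →L[ℝ] E)
        (lvel (E := E) c t) := by
  have hct : MDifferentiableAt 𝓘(ℝ, ℝ) 𝓘(ℝ, E) c t := hc.mdifferentiableAt one_ne_zero
  have hR : MDifferentiableAt 𝓘(ℝ, E) 𝓘(ℝ, E) (fun y => y * g⁻¹) (c t) :=
    mdifferentiableAt_mul_right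
  have hR1 : MDifferentiableAt 𝓘(ℝ, E) 𝓘(ℝ, E) (fun y => y * g⁻¹) (1 : G) :=
    mdifferentiableAt_mul_right
  have hL : MDifferentiableAt 𝓘(ℝ, E) 𝓘(ℝ, E) (fun y => (c t)⁻¹ * y) (c t) :=
    mdifferentiableAt_mul_left
  have hL' : MDifferentiableAt 𝓘(ℝ, E) 𝓘(ℝ, E) (fun y => (c t * g⁻¹)⁻¹ * y) (c t * g⁻¹) :=
    mdifferentiableAt_mul_left
  have hL2 : MDifferentiableAt 𝓘(ℝ, E) 𝓘(ℝ, E) (fun y => g⁻¹⁻¹ * y) ((1 : G) * g⁻¹) :=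
    mdifferentiableAt_mul_left
  have hχ : MDifferentiableAt 𝓘(ℝ, E) 𝓘(ℝ, E) (fun z => g⁻¹⁻¹ * (z * g⁻¹)) ((c t)⁻¹ * c t) :=
    MDifferentiableAt.comp ((c t)⁻¹ * c t) mdifferentiableAt_mul_left
      mdifferentiableAt_mul_right
  have e1 : (mfderiv 𝓘(ℝ, ℝ) 𝓘(ℝ, E) (fun s => c s * g⁻¹) t : ℝ →L[ℝ] E) =
      (mfderiv 𝓘(ℝ, E) 𝓘(ℝ, E) (fun y => y * g⁻¹) (c t)).comp
        (mfderiv 𝓘(ℝ, ℝ) 𝓘(ℝ, E) c t) := mfderiv_comp t hR hct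
  have e2 : (mfderiv 𝓘(ℝ, E) 𝓘(ℝ, E) (fun y => (c t * g⁻¹)⁻¹ * (y * g⁻¹)) (c t) : E →L[ℝ] E) =
      (mfderiv 𝓘(ℝ, E) 𝓘(ℝ, E) (fun y => (c t * g⁻¹)⁻¹ * y) (c t * g⁻¹)).comp
        (mfderiv 𝓘(ℝ, E) 𝓘(ℝ, E) (fun y => y * g⁻¹) (c t)) :=
    mfderiv_comp (c t) hL' hR
  have e3 : (fun y : G => (c t * g⁻¹)⁻¹ * (y * g⁻¹)) =
      fun y : G => g⁻¹⁻¹ * ((c t)⁻¹ * y * g⁻¹) := by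
    funext y; group
  have e4 : (mfderiv 𝓘(ℝ, E) 𝓘(ℝ, E) (fun y : G => g⁻¹⁻¹ * ((c t)⁻¹ * y * g⁻¹)) (c t) :
        E →L[ℝ] E) =
      (mfderiv 𝓘(ℝ, E) 𝓘(ℝ, E) (fun z => g⁻¹⁻¹ * (z * g⁻¹)) ((c t)⁻¹ * c t)).comp
        (mfderiv 𝓘(ℝ, E) 𝓘(ℝ, E) (fun y => (c t)⁻¹ * y) (c t)) :=
    mfderiv_comp (c t) hχ hL
  have e5 : (mfderiv 𝓘(ℝ, E) 𝓘(ℝ, E) (fun z => g⁻¹⁻¹ * (z * g⁻¹)) ((c t)⁻¹ * c t) :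
        E →L[ℝ] E) =
      mfderiv 𝓘(ℝ, E) 𝓘(ℝ, E) (fun z => g⁻¹⁻¹ * (z * g⁻¹)) (1 : G) :=
    mfderiv_point_congr _ (inv_mul_cancel (c t))
  have e6 : (mfderiv 𝓘(ℝ, E) 𝓘(ℝ, E) (fun z => g⁻¹⁻¹ * (z * g⁻¹)) (1 : G) : E →L[ℝ] E) =
      (mfderiv 𝓘(ℝ, E) 𝓘(ℝ, E) (fun y => g⁻¹⁻¹ * y) ((1 : G) * g⁻¹)).comp
        (mfderiv 𝓘(ℝ, E) 𝓘(ℝ, E) (fun y => y * g⁻¹) (1 : G)) :=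
    mfderiv_comp (1 : G) hL2 hR1
  have e7 : (mfderiv 𝓘(ℝ, E) 𝓘(ℝ, E) (fun y => g⁻¹⁻¹ * y) ((1 : G) * g⁻¹) : E →L[ℝ] E) =
      mfderiv 𝓘(ℝ, E) 𝓘(ℝ, E) (fun y => g⁻¹⁻¹ * y) g⁻¹ :=
    mfderiv_point_congr _ (one_mul g⁻¹)
  have key : (mfderiv 𝓘(ℝ, E) 𝓘(ℝ, E) (fun y => (c t * g⁻¹)⁻¹ * y) (c t * g⁻¹)).comp
      (mfderiv 𝓘(ℝ, E) 𝓘(ℝ, E) (fun y => y * g⁻¹) (c t)) =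
      ((mfderiv 𝓘(ℝ, E) 𝓘(ℝ, E) (fun y => g⁻¹⁻¹ * y) g⁻¹).comp
        (mfderiv 𝓘(ℝ, E) 𝓘(ℝ, E) (fun y => y * g⁻¹) 1)).comp
        (mfderiv 𝓘(ℝ, E) 𝓘(ℝ, E) (fun y => (c t)⁻¹ * y) (c t)) := by
    rw [← e2, e3, e4, e5, e6, e7]; rfl
  calc lvel (E := E) (fun s => c s * g⁻¹) t
      = (show E from ((mfderiv 𝓘(ℝ, E) 𝓘(ℝ, E) (fun y => (c t * g⁻¹)⁻¹ * y) (c t * g⁻¹)).comp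
          (mfderiv 𝓘(ℝ, E) 𝓘(ℝ, E) (fun y => y * g⁻¹) (c t)))
          (mfderiv 𝓘(ℝ, ℝ) 𝓘(ℝ, E) c t (1 : ℝ))) := by
        show (mfderiv 𝓘(ℝ, E) 𝓘(ℝ, E) (fun y => (c t * g⁻¹)⁻¹ * y) (c t * g⁻¹) : E →L[ℝ] E)
            (mfderiv 𝓘(ℝ, ℝ) 𝓘(ℝ, E) (fun s => c s * g⁻¹) t (1 : ℝ)) = _
        rw [e1]; rfl
    _ = (show E from (((mfderiv 𝓘(ℝ, E) 𝓘(ℝ, E) (fun y => g⁻¹⁻¹ * y) g⁻¹).comp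
          (mfderiv 𝓘(ℝ, E) 𝓘(ℝ, E) (fun y => y * g⁻¹) 1)).comp
          (mfderiv 𝓘(ℝ, E) 𝓘(ℝ, E) (fun y => (c t)⁻¹ * y) (c t)))
          (mfderiv 𝓘(ℝ, ℝ) 𝓘(ℝ, E) c t (1 : ℝ))) := by rw [key]; rfl
    _ = (show E from ((mfderiv 𝓘(ℝ, E) 𝓘(ℝ, E) (fun y => g⁻¹⁻¹ * y) g⁻¹).comp
        (mfderiv 𝓘(ℝ, E) 𝓘(ℝ, E) (fun y => y * g⁻¹) 1) : E →L[ℝ] E)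
        (lvel (E := E) c t)) := rfl


lemma leftInvPathLength_nonneg (c : ℝ → G) : 0 ≤ leftInvPathLength (E := E) c :=
  intervalIntegral.integral_nonneg (by norm_num) (fun t _ => norm_nonneg _)

lemma leftInvPathLength_eq (c : ℝ → G) :
    leftInvPathLength (E := E) c = ∫ t in (0:ℝ)..1, ‖lvel (E := E) c t‖ := rfl

lemma leftInvPathLength_mul_right_le {c : ℝ → G} (hc : ContMDiff 𝓘(ℝ, ℝ) 𝓘(ℝ, E) 1 c)
    (g : G) :
    leftInvPathLength (E := E) (fun t => c t * g⁻¹) ≤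
      rightTransNorm (E := E) g⁻¹ * leftInvPathLength (E := E) c := by
  have hc' : ContMDiff 𝓘(ℝ, ℝ) 𝓘(ℝ, E) 1 (fun t => c t * g⁻¹) := hc.mul contMDiff_const
  have h1 : Continuous (fun t => ‖lvel (E := E) c t‖) := (continuous_lvel hc).norm
  have h1' : Continuous (fun t => ‖lvel (E := E) (fun s => c s * g⁻¹) t‖) :=
    (continuous_lvel hc').norm
  have hnorm : rightTransNorm (E := E) g⁻¹ =
      ‖(show E →L[ℝ] E from (mfderiv 𝓘(ℝ, E) 𝓘(ℝ, E) (fun y => g⁻¹⁻¹ * y) g⁻¹).comp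
        (mfderiv 𝓘(ℝ, E) 𝓘(ℝ, E) (fun y => y * g⁻¹) 1))‖ := rfl
  rw [leftInvPathLength_eq, leftInvPathLength_eq, hnorm]
  calc (∫ t in (0:ℝ)..1, ‖lvel (E := E) (fun s => c s * g⁻¹) t‖)
      ≤ ∫ t in (0:ℝ)..1,
          ‖(show E →L[ℝ] E from (mfderiv 𝓘(ℝ, E) 𝓘(ℝ, E) (fun y => g⁻¹⁻¹ * y) g⁻¹).comp
            (mfderiv 𝓘(ℝ, E) 𝓘(ℝ, E) (fun y => y * g⁻¹) 1))‖ *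
          ‖lvel (E := E) c t‖ := by
        apply intervalIntegral.integral_mono_on (by norm_num)
          (h1'.intervalIntegrable 0 1) ((continuous_const.mul h1).intervalIntegrable 0 1)
        intro s _
        rw [lvel_mul_right hc g s]
        exact ContinuousLinearMap.le_opNorm _ _
    _ = _ := intervalIntegral.integral_const_mul _ _

end Aux

theorem dist_le_rightTransNorm_inv_mul {E : Type*} [NormedAddCommGroup E] [InnerProductSpace ℝ E]
    {G : Type*} [TopologicalSpace G] [ChartedSpace E G] [Group G] [LieGroup 𝓘(ℝ, E) (⊤ : ℕ∞) G]
    (a b g : G) :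
    leftInvDist (E := E) a b ≤
      rightTransNorm (E := E) g⁻¹ * leftInvDist (E := E) (a * g) (b * g) := by
  classical
  set S1 : Set ℝ := {L | ∃ c : ℝ → G, ContMDiff 𝓘(ℝ, ℝ) 𝓘(ℝ, E) 1 c ∧ c 0 = a ∧ c 1 = b ∧
    L = leftInvPathLength (E := E) c} with hS1
  set S2 : Set ℝ := {L | ∃ c : ℝ → G, ContMDiff 𝓘(ℝ, ℝ) 𝓘(ℝ, E) 1 c ∧ c 0 = a * g ∧
    c 1 = b * g ∧ L = leftInvPathLength (E := E) c} with hS2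
  have hd1 : leftInvDist (E := E) a b = sInf S1 := rfl
  have hd2 : leftInvDist (E := E) (a * g) (b * g) = sInf S2 := rfl
  have hK : (0 : ℝ) ≤ rightTransNorm (E := E) g⁻¹ := norm_nonneg _
  have hbdd : BddBelow S1 := ⟨0, by rintro L ⟨c, hc, h0, h1, rfl⟩; exact leftInvPathLength_nonneg c⟩
  have key : ∀ L ∈ S2, leftInvDist (E := E) a b ≤ rightTransNorm (E := E) g⁻¹ * L := by
    rintro L ⟨c, hc, h0, h1, rfl⟩
    have hmem : leftInvPathLength (E := E) (fun t => c t * g⁻¹) ∈ S1 := by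
      refine ⟨fun t => c t * g⁻¹, hc.mul contMDiff_const, ?_, ?_, rfl⟩
      · show c 0 * g⁻¹ = a; rw [h0, mul_inv_cancel_right]
      · show c 1 * g⁻¹ = b; rw [h1, mul_inv_cancel_right]
    exact le_trans (csInf_le hbdd hmem) (leftInvPathLength_mul_right_le hc g)
  rcases Set.eq_empty_or_nonempty S2 with h2 | h2
  · have h1e : S1 = ∅ := by
      rw [Set.eq_empty_iff_forall_notMem]
      rintro L ⟨c, hc, hc0, hc1, rfl⟩
      have : leftInvPathLength (E := E) (fun t => c t * g) ∈ S2 := by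
        refine ⟨fun t => c t * g, hc.mul contMDiff_const, ?_, ?_, rfl⟩
        · show c 0 * g = a * g; rw [hc0]
        · show c 1 * g = b * g; rw [hc1]
      rw [h2] at this
      exact this
    rw [hd1, hd2, h1e, h2, Real.sInf_empty, mul_zero]
  · rw [hd1, hd2, ← smul_eq_mul, ← Real.sInf_smul_of_nonneg hK]
    refine le_csInf (h2.smul_set) ?_
    rintro x ⟨L, hL, rfl⟩
    simpa [smul_eq_mul, hd1] using key L hL
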